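/- For every pseudo-Oboolean function f: {0,1}^n → ℝ and every i, j ∈ N, the Banzhaf influence index satisfies Φ_B(f,{i,j}) = Φ_B(f,{i}) + Φ_B(f,{j}). -/

import Mathlib

open Finset

/-- The (non-weighted) Banzhaf influence index
`Φ_B(f,S) = 2^{-(n-|S|)} Σ_{T⊆N∖S} (f(T∪S) − f(T))`. -/
noncomputable def banzhafInfluence {n : ℕ} (f : Finset (Fin n) → ℝ) (S : Finset (Fin n)) : ℝ :=
  (1 / 2 ^ (n - S.card)) * ∑ T ∈ (univ \ S).powerset, (f (T ∪ S) - f T)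

/-- `Φ_B(f,{i,j}) = Φ_B(f,{i}) + Φ_B(f,{j})` for distinct `i, j`. -/
theorem banzhafInfluence_pair (n : ℕ) (f : Finset (Fin n) → ℝ) (i j : Fin n) (hij : i ≠ j) :
    banzhafInfluence f {i, j} = banzhafInfluence f {i} + banzhafInfluence f {j} := by
  have hval : (i : ℕ) ≠ (j : ℕ) := fun h => hij (Fin.ext h)
  have hn : 2 ≤ n := by
    have := i.isLt; have := j.isLt; omega
  set A : Finset (Fin n) := univ \ {i, j} with hA
  have hiA : i ∉ A := by simp [hA]
  have hjA : j ∉ A := by simp [hA]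
  have h1 : univ \ ({i} : Finset (Fin n)) = insert j A := by
    ext x
    by_cases hx1 : x = i <;> by_cases hx2 : x = j <;>
      simp [hA, hx1, hx2, hij, hij.symm]
  have h2 : univ \ ({j} : Finset (Fin n)) = insert i A := by
    ext x
    by_cases hx1 : x = i <;> by_cases hx2 : x = j <;>
      simp [hA, hx1, hx2, hij, hij.symm]
  have hus : ∀ (a : Fin n) (s : Finset (Fin n)), s ∪ {a} = insert a s := fun a s => by
    rw [union_comm, ← insert_eq]
  have hcard2 : ({i, j} : Finset (Fin n)).card = 2 := card_pair hij
  unfold banzhafInfluence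
  rw [hcard2, card_singleton, card_singleton, ← hA, h1, h2,
    Finset.sum_powerset_insert hjA, Finset.sum_powerset_insert hiA]
  simp only [union_insert, hus, Finset.insert_comm j i]
  have hc : (1 / (2:ℝ) ^ (n - 2)) = 2 * (1 / 2 ^ (n - 1)) := by
    have h : n - 1 = (n - 2) + 1 := by omega
    rw [h, pow_succ]
    field_simp
  rw [hc]
  rw [← Finset.sum_add_distrib, ← Finset.sum_add_distrib]
  have hsum : ∑ T ∈ A.powerset,
      ((f (insert i T) - f T) + (f (insert i (insert j T)) - f (insert j T))) +
      ∑ T ∈ A.powerset,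
      ((f (insert j T) - f T) + (f (insert i (insert j T)) - f (insert i T))) =
      2 * ∑ T ∈ A.powerset, (f (insert i (insert j T)) - f T) := by
    rw [← Finset.sum_add_distrib, Finset.mul_sum]
    exact Finset.sum_congr rfl fun T _ => by ring
  rw [← mul_add, hsum]; ring
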